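/- The algorithm of the paper defines a retraction: the map sending each tiling f : G_{m,n} → {0,1} to the output of the dappling algorithm is a function r from tilings onto L-dappled tilings satisfying r(f) = f for every L-dappled f; in particular r ∘ r = r and r is surjective onto the set of L-dappled tilings. -/
import Mathlib


def vioH (f : ℕ → ℕ → Fin 2) (p : ℕ) (t : Fin 2) (i j : ℕ) : Prop :=
  p ≤ i ∧ ∀ s ≤ p, f (i - s) j = t

def vioV (f : ℕ → ℕ → Fin 2) (q : ℕ) (t : Fin 2) (i j : ℕ) : Prop :=
  q ≤ j ∧ ∀ s ≤ q, f i (j - s) = t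

def vioAny (p q : Fin 2 → ℕ) (f : ℕ → ℕ → Fin 2) (i j : ℕ) : Prop :=
  ∃ t : Fin 2, vioH f (p t) t i j ∨ vioV f (q t) t i j

def Dappled (m n : ℕ) (p q : Fin 2 → ℕ) (f : ℕ → ℕ → Fin 2) : Prop :=
  ∀ i < m, ∀ j < n, ¬ vioAny p q f i j

def upd (f : ℕ → ℕ → Fin 2) (a b : ℕ) (v : Fin 2) : ℕ → ℕ → Fin 2 :=
  fun i j => if i = a ∧ j = b then v else f i j

def surgery3 (f : ℕ → ℕ → Fin 2) (i j : ℕ) : ℕ → ℕ → Fin 2 :=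
  upd (upd (upd f i j (f (i-1) (j-1))) (i-1) j (1 - f (i-1) (j-1))) i (j-1)
    (1 - f (i-1) (j-1))

def step (m n : ℕ) (p q : Fin 2 → ℕ) (f g : ℕ → ℕ → Fin 2) : Prop :=
  ∃ i j, i < m ∧ j < n ∧ vioAny p q f i j ∧
    (∀ i' j', i' < m → j' < n → i' + j' < i + j → ¬ vioAny p q f i' j') ∧
    ((¬ vioAny p q (upd f i j (1 - f i j)) i j ∧ g = upd f i j (1 - f i j)) ∨
     (vioAny p q (upd f i j (1 - f i j)) i j ∧ g = surgery3 f i j))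

lemma fin2_sub_ne (a : Fin 2) : 1 - a ≠ a := by
  revert a; decide

lemma upd_same (f : ℕ → ℕ → Fin 2) (a b : ℕ) (v : Fin 2) : upd f a b v a b = v :=
  if_pos ⟨rfl, rfl⟩

lemma upd_other (f : ℕ → ℕ → Fin 2) (a b : ℕ) (v : Fin 2) (x y : ℕ)
    (h : ¬(x = a ∧ y = b)) : upd f a b v x y = f x y := if_neg h

lemma surgery3_center (f : ℕ → ℕ → Fin 2) (i j : ℕ) (hi : 1 ≤ i) (hj : 1 ≤ j) :
    surgery3 f i j i j = f (i-1) (j-1) := by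
  unfold surgery3
  rw [upd_other _ _ _ _ i j (by omega), upd_other _ _ _ _ i j (by omega), upd_same]

lemma surgery3_left (f : ℕ → ℕ → Fin 2) (i j : ℕ) (hi : 1 ≤ i) (hj : 1 ≤ j) :
    surgery3 f i j (i-1) j = 1 - f (i-1) (j-1) := by
  unfold surgery3
  rw [upd_other _ _ _ _ (i-1) j (by omega), upd_same]

lemma surgery3_down (f : ℕ → ℕ → Fin 2) (i j : ℕ) :
    surgery3 f i j i (j-1) = 1 - f (i-1) (j-1) := by
  unfold surgery3
  rw [upd_same]

lemma surgery3_else (f : ℕ → ℕ → Fin 2) (i j x y : ℕ)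
    (h1 : ¬(x = i ∧ y = j)) (h2 : ¬(x = i - 1 ∧ y = j)) (h3 : ¬(x = i ∧ y = j - 1)) :
    surgery3 f i j x y = f x y := by
  unfold surgery3
  rw [upd_other _ _ _ _ _ _ h3, upd_other _ _ _ _ _ _ h2, upd_other _ _ _ _ _ _ h1]

lemma vioAny_congr (p q : Fin 2 → ℕ) (f g : ℕ → ℕ → Fin 2) (i j : ℕ)
    (h1 : ∀ s, g (i - s) j = f (i - s) j) (h2 : ∀ s, g i (j - s) = f i (j - s)) :
    vioAny p q g i j ↔ vioAny p q f i j := by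
  unfold vioAny vioH vioV
  simp only [h1, h2]


lemma flip_subset (p q : Fin 2 → ℕ) (f : ℕ → ℕ → Fin 2) (i j : ℕ) (v : Fin 2)
    (hno : ¬ vioAny p q (upd f i j v) i j) :
    ∀ i' j', i' + j' ≤ i + j → vioAny p q (upd f i j v) i' j' →
      vioAny p q f i' j' ∧ ¬(i' = i ∧ j' = j) := by
  intro i' j' hw hv
  have hne : ¬(i' = i ∧ j' = j) := by
    rintro ⟨rfl, rfl⟩; exact hno hv
  refine ⟨?_, hne⟩
  rw [← vioAny_congr p q f (upd f i j v) i' j'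
    (fun s => upd_other _ _ _ _ _ _ (by omega))
    (fun s => upd_other _ _ _ _ _ _ (by omega))]
  exact hv

lemma surgery_setup (p q : Fin 2 → ℕ) (hp : ∀ t, 2 ≤ p t) (hq : ∀ t, 2 ≤ q t)
    (f : ℕ → ℕ → Fin 2) (i j : ℕ) (h1 : vioAny p q f i j)
    (h2 : vioAny p q (upd f i j (1 - f i j)) i j) :
    2 ≤ i ∧ 2 ≤ j ∧ f (i-2) j = f (i-1) j ∧ f i (j-2) = f i (j-1) := by
  obtain ⟨t, ht⟩ := h1
  obtain ⟨u, hu⟩ := h2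
  have hut : u = 1 - f i j := by
    rcases hu with hu | hu
    · have := hu.2 0 (Nat.zero_le _)
      rw [Nat.sub_zero, upd_same] at this; exact this.symm
    · have := hu.2 0 (Nat.zero_le _)
      rw [Nat.sub_zero, upd_same] at this; exact this.symm
  have htt : t = f i j := by
    rcases ht with ht | ht
    · have := ht.2 0 (Nat.zero_le _)
      rw [Nat.sub_zero] at this; exact this.symm
    · have := ht.2 0 (Nat.zero_le _)
      rw [Nat.sub_zero] at this; exact this.symm
  rcases ht with ht | ht
  · -- pre-violation horizontal
    have hi2 : 2 ≤ i := le_trans (hp t) ht.1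
    have hf1 : f (i-1) j = t := ht.2 1 (by have := hp t; omega)
    have hf2 : f (i-2) j = t := ht.2 2 (hp t)
    rcases hu with hu | hu
    · -- post horizontal: impossible
      exfalso
      have := hu.2 1 (by have := hp u; omega)
      rw [upd_other _ _ _ _ _ _ (by omega)] at this
      rw [hf1, htt] at this
      rw [hut] at this
      exact fin2_sub_ne (f i j) this.symm
    · have hj2 : 2 ≤ j := le_trans (hq u) hu.1
      have hg1 := hu.2 1 (by have := hq u; omega)
      have hg2 := hu.2 2 (hq u)
      rw [upd_other _ _ _ _ _ _ (by omega)] at hg1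
      rw [upd_other _ _ _ _ _ _ (by omega)] at hg2
      exact ⟨hi2, hj2, by rw [hf1, hf2], by rw [hg1, hg2]⟩
  · -- pre-violation vertical
    have hj2 : 2 ≤ j := le_trans (hq t) ht.1
    have hf1 : f i (j-1) = t := ht.2 1 (by have := hq t; omega)
    have hf2 : f i (j-2) = t := ht.2 2 (hq t)
    rcases hu with hu | hu
    · have hi2 : 2 ≤ i := le_trans (hp u) hu.1
      have hg1 := hu.2 1 (by have := hp u; omega)
      have hg2 := hu.2 2 (hp u)
      rw [upd_other _ _ _ _ _ _ (by omega)] at hg1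
      rw [upd_other _ _ _ _ _ _ (by omega)] at hg2
      exact ⟨hi2, hj2, by rw [hg1, hg2], by rw [hf1, hf2]⟩
    · -- post vertical: impossible
      exfalso
      have := hu.2 1 (by have := hq u; omega)
      rw [upd_other _ _ _ _ _ _ (by omega)] at this
      rw [hf1, htt] at this
      rw [hut] at this
      exact fin2_sub_ne (f i j) this.symm

lemma surgery_subset (p q : Fin 2 → ℕ) (hp : ∀ t, 2 ≤ p t) (hq : ∀ t, 2 ≤ q t)
    (f : ℕ → ℕ → Fin 2) (i j : ℕ) (hi : 2 ≤ i) (hj : 2 ≤ j)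
    (hc : f (i-2) j = f (i-1) j) (hd : f i (j-2) = f i (j-1))
    (hA : ¬ vioAny p q f (i-1) j) (hB : ¬ vioAny p q f i (j-1)) :
    ∀ i' j', i' + j' ≤ i + j → vioAny p q (surgery3 f i j) i' j' →
      vioAny p q f i' j' ∧ ¬(i' = i ∧ j' = j) := by
  set g := surgery3 f i j with hg
  set a := f (i-1) (j-1) with ha
  have gC : g i j = a := surgery3_center f i j (by omega) (by omega)
  have gL : g (i-1) j = 1 - a := surgery3_left f i j (by omega) (by omega)
  have gD : g i (j-1) = 1 - a := surgery3_down f i j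
  have gE : ∀ x y, ¬(x = i ∧ y = j) → ¬(x = i-1 ∧ y = j) → ¬(x = i ∧ y = j-1) →
      g x y = f x y := fun x y h1 h2 h3 => surgery3_else f i j x y h1 h2 h3
  have nC : ¬ vioAny p q g i j := by
    rintro ⟨t, ht | ht⟩
    · have h0 := ht.2 0 (Nat.zero_le _)
      have h1 := ht.2 1 (by have := hp t; omega)
      rw [Nat.sub_zero, gC] at h0
      rw [gL] at h1
      exact fin2_sub_ne a (h1.trans h0.symm)
    · have h0 := ht.2 0 (Nat.zero_le _)
      have h1 := ht.2 1 (by have := hq t; omega)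
      rw [Nat.sub_zero, gC] at h0
      rw [gD] at h1
      exact fin2_sub_ne a (h1.trans h0.symm)
  have nL : ¬ vioAny p q g (i-1) j := by
    rintro ⟨t, ht | ht⟩
    · have h1 := ht.2 1 (by have := hp t; omega)
      have e1 : i - 1 - 1 = i - 2 := by omega
      rw [e1, gE (i-2) j (by omega) (by omega) (by omega), hc] at h1
      apply hA
      refine ⟨t, Or.inl ⟨ht.1, fun s hs => ?_⟩⟩
      rcases Nat.eq_zero_or_pos s with rfl | hs1
      · rw [Nat.sub_zero]; exact h1
      · rw [← gE (i-1-s) j (by omega) (by omega) (by omega)]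
        exact ht.2 s hs
    · have h0 := ht.2 0 (Nat.zero_le _)
      have h1 := ht.2 1 (by have := hq t; omega)
      rw [Nat.sub_zero, gL] at h0
      rw [gE (i-1) (j-1) (by omega) (by omega) (by omega), ← ha] at h1
      exact fin2_sub_ne a (h0.trans h1.symm)
  have nD : ¬ vioAny p q g i (j-1) := by
    rintro ⟨t, ht | ht⟩
    · have h0 := ht.2 0 (Nat.zero_le _)
      have h1 := ht.2 1 (by have := hp t; omega)
      rw [Nat.sub_zero, gD] at h0
      rw [gE (i-1) (j-1) (by omega) (by omega) (by omega), ← ha] at h1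
      exact fin2_sub_ne a (h0.trans h1.symm)
    · have h1 := ht.2 1 (by have := hq t; omega)
      have e1 : j - 1 - 1 = j - 2 := by omega
      rw [e1, gE i (j-2) (by omega) (by omega) (by omega), hd] at h1
      apply hB
      refine ⟨t, Or.inr ⟨ht.1, fun s hs => ?_⟩⟩
      rcases Nat.eq_zero_or_pos s with rfl | hs1
      · rw [Nat.sub_zero]; exact h1
      · rw [← gE i (j-1-s) (by omega) (by omega) (by omega)]
        exact ht.2 s hs
  have nUR : vioAny p q g (i+1) (j-1) → vioAny p q f (i+1) (j-1) := by
    rintro ⟨t, ht | ht⟩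
    · exfalso
      have h1 := ht.2 1 (by have := hp t; omega)
      have h2 := ht.2 2 (hp t)
      have e1 : i + 1 - 1 = i := by omega
      have e2 : i + 1 - 2 = i - 1 := by omega
      rw [e1, gD] at h1
      rw [e2, gE (i-1) (j-1) (by omega) (by omega) (by omega), ← ha] at h2
      exact fin2_sub_ne a (h1.trans h2.symm)
    · refine ⟨t, Or.inr ⟨ht.1, fun s hs => ?_⟩⟩
      rw [← gE (i+1) (j-1-s) (by omega) (by omega) (by omega)]
      exact ht.2 s hs
  have nUL : vioAny p q g (i-1) (j+1) → vioAny p q f (i-1) (j+1) := by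
    rintro ⟨t, ht | ht⟩
    · refine ⟨t, Or.inl ⟨ht.1, fun s hs => ?_⟩⟩
      rw [← gE (i-1-s) (j+1) (by omega) (by omega) (by omega)]
      exact ht.2 s hs
    · exfalso
      have h1 := ht.2 1 (by have := hq t; omega)
      have h2 := ht.2 2 (hq t)
      have e1 : j + 1 - 1 = j := by omega
      have e2 : j + 1 - 2 = j - 1 := by omega
      rw [e1, gL] at h1
      rw [e2, gE (i-1) (j-1) (by omega) (by omega) (by omega), ← ha] at h2
      exact fin2_sub_ne a (h1.trans h2.symm)
  intro i' j' hw hv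
  have hne : ¬(i' = i ∧ j' = j) := by rintro ⟨rfl, rfl⟩; exact nC hv
  refine ⟨?_, hne⟩
  by_cases k2 : i' = i - 1 ∧ j' = j
  · obtain ⟨rfl, rfl⟩ := k2; exact absurd hv nL
  by_cases k3 : i' = i ∧ j' = j - 1
  · obtain ⟨rfl, rfl⟩ := k3; exact absurd hv nD
  by_cases k4 : i' = i + 1 ∧ j' = j - 1
  · obtain ⟨rfl, rfl⟩ := k4; exact nUR hv
  by_cases k5 : i' = i - 1 ∧ j' = j + 1
  · obtain ⟨rfl, rfl⟩ := k5; exact nUL hv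
  rw [← vioAny_congr p q f g i' j'
    (fun s => gE _ _ (by omega) (by omega) (by omega))
    (fun s => gE _ _ (by omega) (by omega) (by omega))]
  exact hv

open Classical in
noncomputable def muTerm (m n : ℕ) (p q : Fin 2 → ℕ) (f : ℕ → ℕ → Fin 2) (x : ℕ × ℕ) : ℕ :=
  if vioAny p q f x.1 x.2 then (m*n+1)^(m+n - (x.1+x.2)) else 0

noncomputable def mu (m n : ℕ) (p q : Fin 2 → ℕ) (f : ℕ → ℕ → Fin 2) : ℕ :=
  ∑ x ∈ Finset.range m ×ˢ Finset.range n, muTerm m n p q f x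

open Classical in
lemma mu_lt (m n : ℕ) (p q : Fin 2 → ℕ) (f g : ℕ → ℕ → Fin 2) (i j : ℕ)
    (him : i < m) (hjn : j < n) (hvio : vioAny p q f i j)
    (hsub : ∀ i' j', i' + j' ≤ i + j → vioAny p q g i' j' →
      vioAny p q f i' j' ∧ ¬(i' = i ∧ j' = j)) :
    mu m n p q g < mu m n p q f := by
  set K := m*n+1 with hK
  set e := m+n - (i+j) with he
  have he2 : 2 ≤ e := by omega
  set s : Finset (ℕ × ℕ) := Finset.range m ×ˢ Finset.range n with hs
  set sl : Finset (ℕ × ℕ) := s.filter (fun x => x.1 + x.2 ≤ i + j) with hsl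
  have hmem : (i, j) ∈ sl := by
    simp [hsl, hs, Finset.mem_filter, Finset.mem_product, him, hjn]
  have hgz : muTerm m n p q g (i, j) = 0 := by
    apply if_neg
    intro h
    exact (hsub i j le_rfl h).2 ⟨rfl, rfl⟩
  have hfe : muTerm m n p q f (i, j) = K^e := if_pos hvio
  -- low part
  have hlow : (∑ x ∈ sl, muTerm m n p q g x) + K^e ≤ ∑ x ∈ sl, muTerm m n p q f x := by
    rw [← Finset.add_sum_erase sl (muTerm m n p q f) hmem,
        ← Finset.add_sum_erase sl (muTerm m n p q g) hmem, hgz, hfe, zero_add, add_comm]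
    apply Nat.add_le_add_left
    apply Finset.sum_le_sum
    intro x hx
    have hxw : x.1 + x.2 ≤ i + j := (Finset.mem_filter.mp (Finset.mem_of_mem_erase hx)).2
    unfold muTerm
    by_cases hxv : vioAny p q g x.1 x.2
    · rw [if_pos hxv, if_pos (hsub x.1 x.2 hxw hxv).1]
    · rw [if_neg hxv]; exact Nat.zero_le _
  -- high part
  have hhigh : (∑ x ∈ s.filter (fun x => ¬ x.1 + x.2 ≤ i + j), muTerm m n p q g x)
      ≤ (m*n) * K^(e-1) := by
    calc (∑ x ∈ s.filter (fun x => ¬ x.1 + x.2 ≤ i + j), muTerm m n p q g x)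
        ≤ ∑ _x ∈ s.filter (fun x => ¬ x.1 + x.2 ≤ i + j), K^(e-1) := by
          apply Finset.sum_le_sum
          intro x hx
          have hxw : ¬ x.1 + x.2 ≤ i + j := (Finset.mem_filter.mp hx).2
          unfold muTerm
          split
          · exact Nat.pow_le_pow_right (by omega) (by omega)
          · exact Nat.zero_le _
      _ = (s.filter (fun x => ¬ x.1 + x.2 ≤ i + j)).card * K^(e-1) := by
          rw [Finset.sum_const, smul_eq_mul]
      _ ≤ (m*n) * K^(e-1) := by
          apply Nat.mul_le_mul_right
          calc (s.filter (fun x => ¬ x.1 + x.2 ≤ i + j)).card ≤ s.card :=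
                Finset.card_filter_le _ _
            _ = m * n := by rw [hs, Finset.card_product, Finset.card_range, Finset.card_range]
  have hKe : (m*n) * K^(e-1) < K^e := by
    have h1 : 1 ≤ K^(e-1) := Nat.one_le_pow _ _ (by omega)
    calc (m*n) * K^(e-1) < K * K^(e-1) := by
          apply Nat.mul_lt_mul_of_lt_of_le (by omega) le_rfl (by omega)
      _ = K^e := by rw [← pow_succ']; congr 1; omega
  calc mu m n p q g
      = (∑ x ∈ sl, muTerm m n p q g x)
        + ∑ x ∈ s.filter (fun x => ¬ x.1 + x.2 ≤ i + j), muTerm m n p q g x := by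
        rw [mu]; rw [← Finset.sum_filter_add_sum_filter_not s (fun x => x.1 + x.2 ≤ i + j)]
    _ < (∑ x ∈ sl, muTerm m n p q g x) + K^e := by
        apply Nat.add_lt_add_left
        exact lt_of_le_of_lt hhigh hKe
    _ ≤ ∑ x ∈ sl, muTerm m n p q f x := hlow
    _ ≤ mu m n p q f := by
        rw [mu]
        exact Finset.sum_le_sum_of_subset (Finset.filter_subset _ _)
open Classical in
lemma exists_min_vio (m n : ℕ) (p q : Fin 2 → ℕ) (f : ℕ → ℕ → Fin 2)
    (hnd : ¬ Dappled m n p q f) :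
    ∃ i j, i < m ∧ j < n ∧ vioAny p q f i j ∧
      ∀ i' j', i' < m → j' < n → i' + j' < i + j → ¬ vioAny p q f i' j' := by
  have hex : ∃ w, ∃ i j, i < m ∧ j < n ∧ i + j = w ∧ vioAny p q f i j := by
    unfold Dappled at hnd
    push_neg at hnd
    obtain ⟨i, him, j, hjn, hv⟩ := hnd
    exact ⟨i + j, i, j, him, hjn, rfl, hv⟩
  obtain ⟨i, j, him, hjn, hw, hv⟩ := Nat.find_spec hex
  refine ⟨i, j, him, hjn, hv, ?_⟩
  intro i' j' him' hjn' hlt hv'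
  exact Nat.find_min hex (hw ▸ hlt) ⟨i', j', him', hjn', rfl, hv'⟩

lemma exists_dappled (m n : ℕ) (p q : Fin 2 → ℕ)
    (hp : ∀ t, 2 ≤ p t) (hq : ∀ t, 2 ≤ q t) (f : ℕ → ℕ → Fin 2) :
    ∃ g, Relation.ReflTransGen (step m n p q) f g ∧ Dappled m n p q g := by
  have H : ∀ N, ∀ f, mu m n p q f < N →
      ∃ g, Relation.ReflTransGen (step m n p q) f g ∧ Dappled m n p q g := by
    intro N
    induction N with
    | zero => intro f hf; exact absurd hf (Nat.not_lt_zero _)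
    | succ N ih =>
      intro f hf
      by_cases hD : Dappled m n p q f
      · exact ⟨f, Relation.ReflTransGen.refl, hD⟩
      · obtain ⟨i, j, him, hjn, hv, hmin⟩ := exists_min_vio m n p q f hD
        by_cases hflip : vioAny p q (upd f i j (1 - f i j)) i j
        · -- surgery case
          obtain ⟨hi2, hj2, hc, hd⟩ := surgery_setup p q hp hq f i j hv hflip
          have hA : ¬ vioAny p q f (i-1) j := hmin (i-1) j (by omega) hjn (by omega)
          have hB : ¬ vioAny p q f i (j-1) := hmin i (j-1) him (by omega) (by omega)
          have hsub := surgery_subset p q hp hq f i j hi2 hj2 hc hd hA hB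
          have hstep : step m n p q f (surgery3 f i j) :=
            ⟨i, j, him, hjn, hv, hmin, Or.inr ⟨hflip, rfl⟩⟩
          have hlt : mu m n p q (surgery3 f i j) < mu m n p q f :=
            mu_lt m n p q f (surgery3 f i j) i j him hjn hv hsub
          obtain ⟨g, hrtg, hdg⟩ := ih (surgery3 f i j) (by omega)
          exact ⟨g, Relation.ReflTransGen.head hstep hrtg, hdg⟩
        · -- flip case
          have hsub := flip_subset p q f i j (1 - f i j) hflip
          have hstep : step m n p q f (upd f i j (1 - f i j)) :=
            ⟨i, j, him, hjn, hv, hmin, Or.inl ⟨hflip, rfl⟩⟩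
          have hlt : mu m n p q (upd f i j (1 - f i j)) < mu m n p q f :=
            mu_lt m n p q f _ i j him hjn hv hsub
          obtain ⟨g, hrtg, hdg⟩ := ih (upd f i j (1 - f i j)) (by omega)
          exact ⟨g, Relation.ReflTransGen.head hstep hrtg, hdg⟩
  exact H (mu m n p q f + 1) f (by omega)


/-- The dappling algorithm defines a retraction `r` from the set of tilings
onto the set of `L`-dappled tilings: `r f` is obtained from `f` by algorithm
steps, `r f` is always `L`-dappled, `r` fixes every `L`-dappled tiling,
`r ∘ r = r`, and `r` is surjective onto the `L`-dappled tilings. -/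
theorem stmt8 (m n : ℕ) (hm : 1 ≤ m) (hn : 1 ≤ n) (p q : Fin 2 → ℕ)
    (hp : ∀ t, 2 ≤ p t) (hq : ∀ t, 2 ≤ q t) :
    ∃ r : (ℕ → ℕ → Fin 2) → (ℕ → ℕ → Fin 2),
      (∀ f, Relation.ReflTransGen (step m n p q) f (r f)) ∧
      (∀ f, Dappled m n p q (r f)) ∧
      (∀ f, Dappled m n p q f → r f = f) ∧
      r ∘ r = r ∧
      (∀ g, Dappled m n p q g → ∃ f, r f = g) := by
  classical
  refine ⟨fun f => if Dappled m n p q f then f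
    else Classical.choose (exists_dappled m n p q hp hq f), ?_, ?_, ?_, ?_, ?_⟩
  · intro f
    beta_reduce
    by_cases h : Dappled m n p q f
    · rw [if_pos h]
    · rw [if_neg h]
      exact (Classical.choose_spec (exists_dappled m n p q hp hq f)).1
  · intro f
    beta_reduce
    by_cases h : Dappled m n p q f
    · rw [if_pos h]; exact h
    · rw [if_neg h]
      exact (Classical.choose_spec (exists_dappled m n p q hp hq f)).2
  · intro f h; beta_reduce; rw [if_pos h]
  · funext f
    simp only [Function.comp_apply]
    by_cases h : Dappled m n p q f
    · rw [if_pos h, if_pos h]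
    · rw [if_neg h, if_pos (Classical.choose_spec (exists_dappled m n p q hp hq f)).2]
  · intro g hg
    exact ⟨g, by beta_reduce; rw [if_pos hg]⟩
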